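/- Let n be even, k ≥ 2, and n ≤ m ≤ nk/2. Then p(k,n,m) − p(k,n,m−1) ≥ p(k−2,n,m−n) − p(k−2,n,m−n−1), where p(k,n,−1) = 0 by convention. -/

import Mathlib

/-- Number of partitions of `m` with at most `k` parts, each part at most `n`
(partitions contained in a `k × n` rectangle). -/
def p (k n m : ℕ) : ℕ :=
  Fintype.card {π : Nat.Partition m // π.parts.card ≤ k ∧ ∀ j ∈ π.parts, j ≤ n}

/-- `p` extended to integer `m`, with value `0` for negative `m`. -/
def pZ (k n : ℕ) (m : ℤ) : ℕ := if 0 ≤ m then p k n m.toNat else 0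

open MvPolynomial

noncomputable section RS
namespace RS

abbrev P (n : ℕ) := MvPolynomial (Fin (n+1)) ℚ

def cc (n j : ℕ) : ℚ := j * ((n : ℚ) + 1 - j)

def eX (n : ℕ) (i : Fin (n+1)) : P n :=
  if _ : (i : ℕ) = 0 then 0 else cc n i • X ⟨(i:ℕ) - 1, by omega⟩

def fX (n : ℕ) (i : Fin (n+1)) : P n :=
  if _ : (i : ℕ) < n then X ⟨(i:ℕ) + 1, by omega⟩ else 0

def hX (n : ℕ) (i : Fin (n+1)) : P n := ((n : ℚ) - 2 * (i:ℕ)) • X i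

def Eop (n : ℕ) : Derivation ℚ (P n) (P n) := mkDerivation ℚ (eX n)
def Fop (n : ℕ) : Derivation ℚ (P n) (P n) := mkDerivation ℚ (fX n)
def Hop (n : ℕ) : Derivation ℚ (P n) (P n) := mkDerivation ℚ (hX n)

lemma eX_succ (n : ℕ) (i : Fin (n+1)) (h : (i:ℕ) < n) :
    eX n ⟨(i:ℕ)+1, by omega⟩ = cc n ((i:ℕ)+1) • X i := by
  rw [eX, dif_neg (by simp)]
  simp only [Fin.val_mk, Nat.add_sub_cancel]

lemma eX_self (n : ℕ) (i : Fin (n+1)) (h : (i:ℕ) ≠ 0) :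
    eX n i = cc n (i:ℕ) • X ⟨(i:ℕ)-1, by omega⟩ := by rw [eX, dif_neg h]

lemma fX_pred (n : ℕ) (i : Fin (n+1)) (h : (i:ℕ) ≠ 0) :
    fX n ⟨(i:ℕ)-1, by omega⟩ = X i := by
  rw [fX, dif_pos (by simp; omega)]
  congr 1
  apply Fin.ext
  simp; omega

lemma bracket_EF (n : ℕ) : ⁅Eop n, Fop n⁆ = Hop n := by
  apply derivation_ext
  intro i
  rw [Derivation.commutator_apply, Hop, mkDerivation_X]
  have hE : (Eop n) (X i) = eX n i := mkDerivation_X _ _ _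
  have hF : (Fop n) (X i) = fX n i := mkDerivation_X _ _ _
  rw [hE, hF]
  by_cases hi : (i : ℕ) < n
  · rw [fX, dif_pos hi]
    have h1 : (Eop n) (X (⟨(i:ℕ)+1, by omega⟩ : Fin (n+1))) = eX n ⟨(i:ℕ)+1, by omega⟩ :=
      mkDerivation_X _ _ _
    rw [h1, eX_succ n i hi]
    by_cases hi0 : (i : ℕ) = 0
    · rw [eX, dif_pos hi0, map_zero, sub_zero, hX]
      congr 1
      rw [cc, hi0]; push_cast; ring
    · rw [eX_self n i hi0, (Fop n).map_smul]
      rw [show ((Fop n) (X (⟨(i:ℕ)-1, by omega⟩ : Fin (n+1)))) = fX n ⟨(i:ℕ)-1, by omega⟩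
        from mkDerivation_X _ _ _]
      rw [fX_pred n i hi0, hX, ← sub_smul]
      congr 1
      rw [cc, cc]; push_cast [Nat.cast_sub (by omega : 1 ≤ (i:ℕ))]; ring
  · have hin : (i : ℕ) = n := by omega
    rw [fX, dif_neg hi, map_zero, zero_sub]
    by_cases hi0 : (i : ℕ) = 0
    · rw [eX, dif_pos hi0, map_zero, neg_zero, hX]
      have hn0 : n = 0 := by omega
      have : ((n:ℚ) - 2 * (i:ℕ)) = 0 := by
        rw [hi0, hn0]; norm_num
      rw [this, zero_smul]
    · rw [eX_self n i hi0, (Fop n).map_smul]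
      rw [show ((Fop n) (X (⟨(i:ℕ)-1, by omega⟩ : Fin (n+1)))) = fX n ⟨(i:ℕ)-1, by omega⟩
        from mkDerivation_X _ _ _]
      rw [fX_pred n i hi0, hX, ← neg_smul]
      congr 1
      rw [cc, hin]; push_cast; ring




/-- number of boxes (degree) -/
def degD {n : ℕ} (σ : Fin (n+1) →₀ ℕ) : ℕ := σ.sum fun _ e => e
/-- weight -/
def degW {n : ℕ} (σ : Fin (n+1) →₀ ℕ) : ℕ := σ.sum fun i e => (i : ℕ) * e

def cls (n k m : ℕ) : Set (Fin (n+1) →₀ ℕ) := {σ | degD σ = k ∧ degW σ = m}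

def VV (n k m : ℕ) : Submodule ℚ (P n) := restrictSupport ℚ (cls n k m)

lemma degD_add {n : ℕ} (a b : Fin (n+1) →₀ ℕ) : degD (a + b) = degD a + degD b :=
  Finsupp.sum_add_index' (fun _ => rfl) (fun _ _ _ => rfl)

lemma degW_add {n : ℕ} (a b : Fin (n+1) →₀ ℕ) : degW (a + b) = degW a + degW b :=
  Finsupp.sum_add_index' (fun i => (Nat.mul_zero _)) (fun i x y => Nat.mul_add _ _ _)

lemma degD_single {n : ℕ} (i : Fin (n+1)) (t : ℕ) : degD (Finsupp.single i t) = t :=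
  Finsupp.sum_single_index rfl

lemma degW_single {n : ℕ} (i : Fin (n+1)) (t : ℕ) :
    degW (Finsupp.single i t) = (i : ℕ) * t :=
  Finsupp.sum_single_index (Nat.mul_zero _)

lemma monomial_mem_VV {n k m : ℕ} {σ : Fin (n+1) →₀ ℕ} (h1 : degD σ = k) (h2 : degW σ = m)
    (r : ℚ) : monomial σ r ∈ VV n k m := by
  show (↑((monomial σ r : P n).support) : Set _) ⊆ cls n k m
  intro τ hτ
  classical
  have : τ ∈ (monomial σ r).support := hτ
  rw [support_monomial] at this
  by_cases hr : r = 0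
  · rw [if_pos hr] at this; exact absurd this (Finset.notMem_empty _)
  · rw [if_neg hr] at this
    rw [Finset.mem_singleton] at this
    subst this
    exact ⟨h1, h2⟩

lemma mem_VV_iff {n k m : ℕ} (x : P n) :
    x ∈ VV n k m ↔ ∀ σ ∈ x.support, degD σ = k ∧ degW σ = m := by
  show (↑(x.support) : Set _) ⊆ cls n k m ↔ _
  constructor
  · intro h σ hσ; exact h hσ
  · intro h σ hσ; exact h σ hσ

/-- decompose sub-single: if `σ i ≠ 0` then `σ = (σ - single i 1) + single i 1`. -/
lemma sub_single_add {n : ℕ} (σ : Fin (n+1) →₀ ℕ) (i : Fin (n+1)) (h : σ i ≠ 0) :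
    (σ - Finsupp.single i 1) + Finsupp.single i 1 = σ := by
  ext j
  by_cases hj : j = i
  · subst hj
    simp [Finsupp.sub_apply, Finsupp.single_eq_same]
    omega
  · simp [Finsupp.sub_apply, Finsupp.single_eq_of_ne hj]

lemma degD_sub_single {n : ℕ} (σ : Fin (n+1) →₀ ℕ) (i : Fin (n+1)) (h : σ i ≠ 0) :
    degD (σ - Finsupp.single i 1) + 1 = degD σ := by
  conv_rhs => rw [← sub_single_add σ i h]
  rw [degD_add, degD_single]

lemma degW_sub_single {n : ℕ} (σ : Fin (n+1) →₀ ℕ) (i : Fin (n+1)) (h : σ i ≠ 0) :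
    degW (σ - Finsupp.single i 1) + (i:ℕ) = degW σ := by
  conv_rhs => rw [← sub_single_add σ i h]
  rw [degW_add, degW_single, Nat.mul_one]


section Action
variable {n : ℕ}

lemma eX_zero {i : Fin (n+1)} (h : (i:ℕ) = 0) : eX n i = 0 := by rw [eX, dif_pos h]

lemma fX_top {i : Fin (n+1)} (h : ¬ (i:ℕ) < n) : fX n i = 0 := by rw [fX, dif_neg h]

lemma X_as_monomial (j : Fin (n+1)) : (X j : P n) = monomial (Finsupp.single j 1) 1 := rfl

lemma E_mon_mem (σ : Fin (n+1) →₀ ℕ) (r : ℚ) :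
    (Eop n) (monomial σ r) ∈ VV n (degD σ) (degW σ - 1) := by
  rw [Eop, mkDerivation_monomial]
  apply Submodule.smul_mem
  rw [Finsupp.sum]
  apply Submodule.sum_mem
  intro i hi
  have hσi : σ i ≠ 0 := Finsupp.mem_support_iff.mp hi
  by_cases h0 : (i : ℕ) = 0
  · rw [eX_zero h0, smul_zero]; exact Submodule.zero_mem _
  · rw [eX_self n i h0, smul_comm, smul_eq_mul, X_as_monomial, monomial_mul, mul_one]
    apply Submodule.smul_mem
    have hD := degD_sub_single σ i hσi
    have hW := degW_sub_single σ i hσi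
    have hWi : (i:ℕ) ≤ degW σ := by omega
    apply monomial_mem_VV
    · rw [degD_add, degD_single]; omega
    · rw [degW_add, degW_single]
      simp only [Fin.val_mk, Nat.mul_one]
      omega

lemma E_mon_zero (σ : Fin (n+1) →₀ ℕ) (r : ℚ) (h : degW σ = 0) :
    (Eop n) (monomial σ r) = 0 := by
  rw [Eop, mkDerivation_monomial]
  have : (σ.sum fun i e => (monomial (σ - Finsupp.single i 1) (e : ℚ)) • eX n i) = 0 := by
    apply Finset.sum_eq_zero
    intro i hi
    have hσi : σ i ≠ 0 := Finsupp.mem_support_iff.mp hi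
    have h0 : (i : ℕ) = 0 := by
      have := (Finset.sum_eq_zero_iff).mp h i hi
      rcases Nat.mul_eq_zero.mp this with h' | h'
      · exact h'
      · exact absurd h' hσi
    simp only [eX_zero h0, smul_zero]
  rw [this, smul_zero]

lemma F_mon_mem (σ : Fin (n+1) →₀ ℕ) (r : ℚ) :
    (Fop n) (monomial σ r) ∈ VV n (degD σ) (degW σ + 1) := by
  rw [Fop, mkDerivation_monomial]
  apply Submodule.smul_mem
  rw [Finsupp.sum]
  apply Submodule.sum_mem
  intro i hi
  have hσi : σ i ≠ 0 := Finsupp.mem_support_iff.mp hi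
  by_cases h0 : (i : ℕ) < n
  · rw [fX, dif_pos h0, smul_eq_mul, X_as_monomial, monomial_mul, mul_one]
    have hD := degD_sub_single σ i hσi
    have hW := degW_sub_single σ i hσi
    apply monomial_mem_VV
    · rw [degD_add, degD_single]; omega
    · rw [degW_add, degW_single]
      simp only [Fin.val_mk, Nat.mul_one]
      omega
  · rw [fX_top h0, smul_zero]; exact Submodule.zero_mem _

lemma H_mon (σ : Fin (n+1) →₀ ℕ) (r : ℚ) :
    (Hop n) (monomial σ r) =
      ((n : ℚ) * (degD σ) - 2 * (degW σ)) • monomial σ r := by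
  rw [Hop, mkDerivation_monomial]
  have key : (σ.sum fun i e => (monomial (σ - Finsupp.single i 1) (e : ℚ)) • hX n i) =
      ((n : ℚ) * (degD σ) - 2 * (degW σ)) • monomial σ 1 := by
    rw [Finsupp.sum]
    have : ∀ i ∈ σ.support,
        (monomial (σ - Finsupp.single i 1) ((σ i : ℚ))) • hX n i =
          (((n:ℚ) - 2 * (i:ℕ)) * (σ i : ℚ)) • monomial σ 1 := by
      intro i hi
      have hσi : σ i ≠ 0 := Finsupp.mem_support_iff.mp hi
      rw [hX, smul_comm, smul_eq_mul, X_as_monomial, monomial_mul, mul_one,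
        sub_single_add σ i hσi, mul_smul]
      congr 1
      rw [← map_smul (monomial σ), smul_eq_mul, mul_one]
    rw [Finset.sum_congr rfl this, ← Finset.sum_smul]
    congr 1
    have expand : ∀ i ∈ σ.support,
        ((n:ℚ) - 2 * (i:ℕ)) * (σ i : ℚ)
          = (n:ℚ) * (σ i : ℚ) - 2 * (((i:ℕ) * σ i : ℕ) : ℚ) := by
      intro i _; push_cast; ring
    rw [Finset.sum_congr rfl expand, Finset.sum_sub_distrib, ← Finset.mul_sum,
      ← Finset.mul_sum]
    rw [degD, degW, Finsupp.sum, Finsupp.sum]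
    push_cast
    ring
  rw [key, smul_comm]
  congr 1
  rw [← map_smul (monomial σ), smul_eq_mul, mul_one]

lemma E_mem {k m : ℕ} {x : P n} (hx : x ∈ VV n k m) : (Eop n) x ∈ VV n k (m-1) := by
  have hsup := (mem_VV_iff x).mp hx
  rw [x.as_sum, map_sum]
  apply Submodule.sum_mem
  intro σ hσ
  obtain ⟨h1, h2⟩ := hsup σ hσ
  have h := E_mon_mem (n := n) σ (coeff σ x)
  rwa [h1, h2] at h

lemma E_zero {k : ℕ} {x : P n} (hx : x ∈ VV n k 0) : (Eop n) x = 0 := by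
  have hsup := (mem_VV_iff x).mp hx
  rw [x.as_sum, map_sum]
  apply Finset.sum_eq_zero
  intro σ hσ
  exact E_mon_zero σ _ (hsup σ hσ).2

lemma F_mem {k m : ℕ} {x : P n} (hx : x ∈ VV n k m) : (Fop n) x ∈ VV n k (m+1) := by
  have hsup := (mem_VV_iff x).mp hx
  rw [x.as_sum, map_sum]
  apply Submodule.sum_mem
  intro σ hσ
  obtain ⟨h1, h2⟩ := hsup σ hσ
  have h := F_mon_mem (n := n) σ (coeff σ x)
  rwa [h1, h2] at h

lemma mul_mem_VV {k1 m1 k2 m2 : ℕ} {x y : P n} (hx : x ∈ VV n k1 m1)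
    (hy : y ∈ VV n k2 m2) : x * y ∈ VV n (k1+k2) (m1+m2) := by
  classical
  have hsx := (mem_VV_iff x).mp hx
  have hsy := (mem_VV_iff y).mp hy
  rw [mem_VV_iff]
  intro τ hτ
  have := support_mul x y hτ
  rw [Finset.mem_add] at this
  obtain ⟨a, ha, b, hb, rfl⟩ := this
  obtain ⟨ha1, ha2⟩ := hsx a ha
  obtain ⟨hb1, hb2⟩ := hsy b hb
  rw [degD_add, degW_add, ha1, ha2, hb1, hb2]
  exact ⟨rfl, rfl⟩

end Action

section Quadric
variable {n : ℕ}

/-- guarded variable -/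
def XR (n j : ℕ) : P n := if h : j ≤ n then X ⟨j, by omega⟩ else 0

lemma E_XR (j : ℕ) : (Eop n) (XR n j) = cc n j • XR n (j-1) := by
  rcases Nat.eq_zero_or_pos j with hj | hj
  · subst hj
    rw [XR, dif_pos (Nat.zero_le n)]
    rw [show (Eop n) (X (⟨0, by omega⟩ : Fin (n+1))) = eX n ⟨0, by omega⟩ from
      mkDerivation_X _ _ _]
    rw [eX_zero rfl, cc]
    norm_num
  · by_cases hjn : j ≤ n
    · rw [XR, dif_pos hjn]
      rw [show (Eop n) (X (⟨j, by omega⟩ : Fin (n+1))) = eX n ⟨j, by omega⟩ from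
        mkDerivation_X _ _ _]
      rw [eX_self n _ (by simpa using by omega : ((⟨j, by omega⟩ : Fin (n+1)) : ℕ) ≠ 0)]
      rw [XR, dif_pos (by omega)]
    · by_cases hj1 : j = n + 1
      · rw [XR, dif_neg hjn, map_zero, cc, hj1]
        push_cast
        rw [show ((n:ℚ) + 1 - (n+1)) = 0 by ring]
        rw [mul_zero, zero_smul]
      · rw [XR, dif_neg hjn, map_zero, XR, dif_neg (by omega), smul_zero]

/-- the invariant quadric -/
def Qp (n : ℕ) : P n := ∑ j ∈ Finset.range (n+1), ((-1:ℚ))^j • (XR n j * XR n (n-j))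

lemma cc_sym {j : ℕ} (h1 : 1 ≤ j) (h2 : j ≤ n) : cc n (n - (j-1)) = cc n j := by
  rw [cc, cc]
  have e1 : ((n - (j-1) : ℕ) : ℚ) = (n:ℚ) - (j:ℚ) + 1 := by
    have : (n : ℕ) - (j-1) = n - j + 1 := by omega
    rw [this]
    push_cast [Nat.cast_sub h2]
    ring
  rw [e1]
  push_cast
  ring

lemma E_Qp : (Eop n) (Qp n) = 0 := by
  rw [Qp, map_sum]
  have expand : ∀ j ∈ Finset.range (n+1),
      (Eop n) ((-1:ℚ)^j • (XR n j * XR n (n-j))) =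
        ((-1:ℚ)^j • (cc n (n-j) • (XR n j * XR n (n-j-1))))
          + ((-1:ℚ)^j • (cc n j • (XR n (n-j) * XR n (j-1)))) := by
    intro j hj
    rw [Derivation.map_smul, Derivation.leibniz, E_XR, E_XR, smul_eq_mul, smul_eq_mul,
      mul_smul_comm, mul_smul_comm, smul_add]
  rw [Finset.sum_congr rfl expand, Finset.sum_add_distrib]
  have h1 : ∑ j ∈ Finset.range (n+1), (-1:ℚ)^j • (cc n j • (XR n (n-j) * XR n (j-1)))
      = - ∑ j ∈ Finset.range n, (-1:ℚ)^j • (cc n (n-j) • (XR n j * XR n (n-j-1))) := by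
    rw [Finset.sum_range_succ']
    have h0 : (-1:ℚ)^0 • (cc n 0 • (XR n (n-0) * XR n (0-1))) = 0 := by
      rw [cc]; norm_num
    rw [h0, add_zero, ← Finset.sum_neg_distrib]
    apply Finset.sum_congr rfl
    intro j hj
    rw [Finset.mem_range] at hj
    have e1 : (j+1) - 1 = j := by omega
    have e2 : n - (j+1) = n - j - 1 := by omega
    have e3 : cc n (j+1) = cc n (n-j) := by
      have h := cc_sym (n := n) (j := j+1) (by omega) (by omega)
      simpa using h.symm
    rw [e1, e2, e3, mul_comm (XR n (n - j - 1)) (XR n j), pow_succ, mul_neg_one,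
      neg_smul]
  have h2 : ∑ j ∈ Finset.range (n+1), (-1:ℚ)^j • (cc n (n-j) • (XR n j * XR n (n-j-1)))
      = ∑ j ∈ Finset.range n, (-1:ℚ)^j • (cc n (n-j) • (XR n j * XR n (n-j-1))) := by
    rw [Finset.sum_range_succ]
    have hz : cc n (n - n) = 0 := by rw [Nat.sub_self, cc]; norm_num
    rw [hz]
    norm_num
  rw [h1, h2]
  ring

lemma Qp_mem : Qp n ∈ VV n 2 n := by
  rw [Qp]
  apply Submodule.sum_mem
  intro j hj
  rw [Finset.mem_range] at hj
  apply Submodule.smul_mem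
  have hx : XR n j ∈ VV n 1 j := by
    rw [XR, dif_pos (by omega : j ≤ n), X_as_monomial]
    apply monomial_mem_VV (degD_single _ _)
    rw [degW_single]
    simp
  have hy : XR n (n-j) ∈ VV n 1 (n-j) := by
    rw [XR, dif_pos (by omega : n - j ≤ n), X_as_monomial]
    apply monomial_mem_VV (degD_single _ _)
    rw [degW_single]
    simp
  have := mul_mem_VV hx hy
  have e : j + (n - j) = n := by omega
  rwa [e] at this

lemma Qp_ne_zero (hn : Even n) : Qp n ≠ 0 := by
  classical
  obtain ⟨c, hc⟩ := hn
  have hcn : c ≤ n := by omega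
  have hc2 : n - c = c := by omega
  have key : coeff (Finsupp.single (⟨c, by omega⟩ : Fin (n+1)) 2) (Qp n) = (-1:ℚ)^c := by
    rw [Qp, coeff_sum]
    have hterm : ∀ j ∈ Finset.range (n+1),
        coeff (Finsupp.single (⟨c, by omega⟩ : Fin (n+1)) 2)
          ((-1:ℚ)^j • (XR n j * XR n (n-j))) = if j = c then (-1:ℚ)^c else 0 := by
      intro j hj
      rw [Finset.mem_range] at hj
      rw [coeff_smul, XR, dif_pos (by omega : j ≤ n), XR, dif_pos (by omega : n - j ≤ n),
        X_as_monomial, X_as_monomial, monomial_mul, mul_one, coeff_monomial]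
      by_cases hjc : j = c
      · subst hjc
        have h2 : (⟨n - j, by omega⟩ : Fin (n+1)) = (⟨j, by omega⟩ : Fin (n+1)) := by
          apply Fin.ext
          simp [hc2]
        rw [h2, ← Finsupp.single_add, if_pos, if_pos rfl]
        · rw [smul_eq_mul, mul_one]
        · norm_num
      · rw [if_neg, if_neg hjc, smul_zero]
        intro heq
        apply hjc
        have happ := DFunLike.congr_fun heq (⟨j, by omega⟩ : Fin (n+1))
        have hja : (⟨j, by omega⟩ : Fin (n+1)) ≠ (⟨c, by omega⟩ : Fin (n+1)) := by
          intro hcon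
          exact hjc (Fin.mk.inj_iff.mp hcon)
        rw [Finsupp.single_eq_of_ne hja, Finsupp.add_apply,
          Finsupp.single_eq_same] at happ
        omega
    rw [Finset.sum_congr rfl hterm, Finset.sum_ite_eq' (Finset.range (n+1)) c, if_pos]
    rw [Finset.mem_range]; omega
  intro hQ
  rw [hQ, coeff_zero] at key
  exact (pow_ne_zero c (by norm_num : (-1:ℚ) ≠ 0)) key.symm

end Quadric

/-! ## Counting: dimensions of graded pieces are the partition numbers -/

section Counting
variable {n : ℕ}

lemma apply_le_degD (σ : Fin (n+1) →₀ ℕ) (i : Fin (n+1)) : σ i ≤ degD σ := by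
  by_cases hi : i ∈ σ.support
  · exact Finset.single_le_sum (f := fun j => σ j) (fun j _ => Nat.zero_le _) hi
  · rw [Finsupp.notMem_support_iff.mp hi]
    exact Nat.zero_le _

lemma cls_finite (n k m : ℕ) : Finite ↥(cls n k m) := by
  apply Finite.of_injective
    (fun x : ↥(cls n k m) =>
      (fun i => (⟨x.1 i, by
        have h := apply_le_degD x.1 i
        have hk := x.2.1
        omega⟩ : Fin (k+1)) : Fin (n+1) → Fin (k+1)))
  intro x y hxy
  apply Subtype.ext
  apply Finsupp.ext
  intro i
  exact Fin.mk.inj_iff.mp (congr_fun hxy i)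

/-- `σ` as a function on `ℕ` -/
def σa (σ : Fin (n+1) →₀ ℕ) : ℕ → ℕ := fun j => if h : j < n+1 then σ ⟨j, h⟩ else 0

lemma degD_eq (σ : Fin (n+1) →₀ ℕ) : degD σ = ∑ j ∈ Finset.range (n+1), σa σ j := by
  rw [degD, Finsupp.sum_fintype _ _ (fun _ => rfl)]
  rw [← Fin.sum_univ_eq_sum_range (σa σ) (n+1)]
  apply Finset.sum_congr rfl
  intro i _
  rw [σa, dif_pos i.isLt, Fin.eta]

lemma degW_eq (σ : Fin (n+1) →₀ ℕ) : degW σ = ∑ j ∈ Finset.range (n+1), j * σa σ j := by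
  rw [degW, Finsupp.sum_fintype _ _ (fun _ => Nat.mul_zero _)]
  rw [← Fin.sum_univ_eq_sum_range (fun j => j * σa σ j) (n+1)]
  apply Finset.sum_congr rfl
  intro i _
  rw [σa, dif_pos i.isLt, Fin.eta]

/-- the multiset of parts attached to a monomial exponent -/
def Pm (σ : Fin (n+1) →₀ ℕ) : Multiset ℕ :=
  ∑ j ∈ Finset.range n, Multiset.replicate (σa σ (j+1)) (j+1)

lemma Pm_sum (σ : Fin (n+1) →₀ ℕ) : (Pm σ).sum = degW σ := by
  have h1 : (Pm σ).sum = ∑ j ∈ Finset.range n, (Multiset.replicate (σa σ (j+1)) (j+1)).sum := by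
    rw [Pm, ← Multiset.coe_sumAddMonoidHom, map_sum]
  rw [h1, degW_eq, Finset.sum_range_succ']
  simp only [Multiset.sum_replicate, smul_eq_mul, Nat.mul_zero, add_zero]
  have hc : ∀ j ∈ Finset.range n, σa σ (j+1) * (j+1) = (j+1) * σa σ (j+1) :=
    fun j _ => Nat.mul_comm _ _
  rw [Finset.sum_congr rfl hc, Nat.zero_mul, add_zero]

def cardHom : Multiset ℕ →+ ℕ :=
  { toFun := Multiset.card, map_zero' := Multiset.card_zero, map_add' := Multiset.card_add }

lemma Pm_card (σ : Fin (n+1) →₀ ℕ) :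
    Multiset.card (Pm σ) + σa σ 0 = degD σ := by
  have h1 : Multiset.card (Pm σ)
      = ∑ j ∈ Finset.range n, Multiset.card (Multiset.replicate (σa σ (j+1)) (j+1)) := by
    rw [Pm]
    exact map_sum cardHom _ _
  rw [h1, degD_eq, Finset.sum_range_succ']
  simp [Multiset.card_replicate]

lemma Pm_count (σ : Fin (n+1) →₀ ℕ) (a : ℕ) :
    Multiset.count a (Pm σ) = if 1 ≤ a ∧ a ≤ n then σa σ a else 0 := by
  rw [Pm, Multiset.count_sum']
  by_cases ha : 1 ≤ a ∧ a ≤ n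
  · rw [if_pos ha]
    rw [Finset.sum_eq_single (a-1)]
    · rw [Multiset.count_replicate, if_pos (by omega)]
      congr 1
      omega
    · intro j hj hja
      rw [Multiset.count_replicate, if_neg (by omega)]
    · intro h
      exfalso
      apply h
      rw [Finset.mem_range]
      omega
  · rw [if_neg ha]
    apply Finset.sum_eq_zero
    intro j hj
    rw [Finset.mem_range] at hj
    rw [Multiset.count_replicate, if_neg (by omega)]

lemma count_range_sum (C : Multiset ℕ) (hC : ∀ j ∈ C, j ≤ n) :
    ∑ v ∈ Finset.range (n+1), Multiset.count v C = Multiset.card C := by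
  rw [← Multiset.toFinset_sum_count_eq C]
  apply (Finset.sum_subset ?_ ?_).symm
  · intro x hx
    rw [Multiset.mem_toFinset] at hx
    rw [Finset.mem_range]
    exact Nat.lt_succ_of_le (hC x hx)
  · intro x _ hx
    rw [Multiset.count_eq_zero]
    intro hmem
    exact hx (Multiset.mem_toFinset.mpr hmem)

lemma sum_range_sum (C : Multiset ℕ) (hC : ∀ j ∈ C, j ≤ n) :
    ∑ v ∈ Finset.range (n+1), v * Multiset.count v C = C.sum := by
  have key : C.sum = ∑ v ∈ C.toFinset, v * Multiset.count v C := by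
    conv_lhs => rw [← Multiset.toFinset_sum_count_nsmul_eq C]
    rw [← Multiset.coe_sumAddMonoidHom, map_sum]
    apply Finset.sum_congr rfl
    intro v _
    rw [Multiset.coe_sumAddMonoidHom, Multiset.nsmul_singleton, Multiset.sum_replicate,
      smul_eq_mul, mul_comm]
  rw [key]
  apply (Finset.sum_subset ?_ ?_).symm
  · intro x hx
    rw [Multiset.mem_toFinset] at hx
    rw [Finset.mem_range]
    exact Nat.lt_succ_of_le (hC x hx)
  · intro x _ hx
    rw [Multiset.count_eq_zero_of_notMem (fun hmem => hx (Multiset.mem_toFinset.mpr hmem))]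
    ring

lemma mem_Pm_bounds {σ : Fin (n+1) →₀ ℕ} {a : ℕ} (ha : a ∈ Pm σ) : 1 ≤ a ∧ a ≤ n := by
  have h := Multiset.count_pos.mpr ha
  rw [Pm_count] at h
  by_contra hcon
  rw [if_neg hcon] at h
  omega

def clsEquiv (n k m : ℕ) :
    ↥(cls n k m) ≃ {π : Nat.Partition m // π.parts.card ≤ k ∧ ∀ j ∈ π.parts, j ≤ n} where
  toFun x :=
    ⟨⟨Pm x.1, fun hi => (mem_Pm_bounds hi).1, by rw [Pm_sum]; exact x.2.2⟩,
      by
        have hc := Pm_card x.1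
        rw [x.2.1] at hc
        simp only
        omega,
      fun j hj => (mem_Pm_bounds hj).2⟩
  invFun y :=
    ⟨Finsupp.equivFunOnFinite.symm
      (fun i => if (i:ℕ) = 0 then k - Multiset.card y.1.parts
        else Multiset.count (i:ℕ) y.1.parts),
     by
      obtain ⟨⟨C, hpos, hsum⟩, hcard, hbound⟩ := y
      simp only at hcard hbound ⊢
      have hσa : ∀ j, σa (Finsupp.equivFunOnFinite.symm
          ((fun i => if (i:ℕ) = 0 then k - Multiset.card C else Multiset.count (i:ℕ) C) :
            Fin (n+1) → ℕ)) j
          = if h : j < n+1 then (if j = 0 then k - Multiset.card C else Multiset.count j C)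
            else 0 := by
        intro j
        rw [σa]
        split_ifs with h hj
        · simp only [Finsupp.coe_equivFunOnFinite_symm, Fin.val_mk, if_pos hj]
        · simp only [Finsupp.coe_equivFunOnFinite_symm, Fin.val_mk, if_neg hj]
        · rfl
      have hcount0 : Multiset.count 0 C = 0 := by
        rw [Multiset.count_eq_zero]
        intro hmem
        exact absurd (hpos hmem) (by omega)
      have hD : ∑ j ∈ Finset.range n,
          Multiset.count (j+1) C = Multiset.card C := by
        have h1 := count_range_sum C hbound
        rw [Finset.sum_range_succ'] at h1
        rw [hcount0, add_zero] at h1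
        exact h1
      constructor
      · rw [degD_eq, Finset.sum_range_succ']
        have e0 : ∀ j ∈ Finset.range n,
            σa (Finsupp.equivFunOnFinite.symm
              ((fun i => if (i:ℕ) = 0 then k - Multiset.card C else Multiset.count (i:ℕ) C) :
                Fin (n+1) → ℕ)) (j+1) = Multiset.count (j+1) C := by
          intro j hj
          rw [Finset.mem_range] at hj
          rw [hσa, dif_pos (by omega), if_neg (by omega)]
        rw [Finset.sum_congr rfl e0, hσa 0, dif_pos (by omega), if_pos rfl, hD]
        omega
      · rw [degW_eq, Finset.sum_range_succ']
        have e0 : ∀ j ∈ Finset.range n,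
            (j+1) * σa (Finsupp.equivFunOnFinite.symm
              ((fun i => if (i:ℕ) = 0 then k - Multiset.card C else Multiset.count (i:ℕ) C) :
                Fin (n+1) → ℕ)) (j+1) = (j+1) * Multiset.count (j+1) C := by
          intro j hj
          rw [Finset.mem_range] at hj
          rw [hσa, dif_pos (by omega), if_neg (by omega)]
        rw [Finset.sum_congr rfl e0]
        have h2 := sum_range_sum C hbound
        rw [Finset.sum_range_succ'] at h2
        simp only [Nat.zero_mul, add_zero] at h2
        rw [h2, hsum]
        simp⟩
  left_inv x := by
    apply Subtype.ext
    apply Finsupp.ext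
    intro i
    simp only [Finsupp.coe_equivFunOnFinite_symm]
    by_cases hi : (i:ℕ) = 0
    · rw [if_pos hi]
      have hc := Pm_card x.1
      rw [x.2.1] at hc
      have hσ0 : σa x.1 0 = x.1 i := by
        rw [σa, dif_pos (by omega)]
        congr 1
        apply Fin.ext
        simp [hi]
      omega
    · rw [if_neg hi]
      rw [Pm_count, if_pos (by constructor <;> [omega; exact Nat.lt_succ_iff.mp i.isLt])]
      rw [σa, dif_pos i.isLt, Fin.eta]
  right_inv y := by
    apply Subtype.ext
    apply Nat.Partition.ext
    apply Multiset.ext'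
    intro a
    obtain ⟨⟨C, hpos, hsum⟩, hcard, hbound⟩ := y
    simp only
    rw [Pm_count]
    by_cases ha : 1 ≤ a ∧ a ≤ n
    · rw [if_pos ha, σa, dif_pos (by omega)]
      simp only [Finsupp.coe_equivFunOnFinite_symm, Fin.val_mk]
      rw [if_neg (by omega)]
    · rw [if_neg ha]
      rcases (by omega : a = 0 ∨ a > n) with h0 | hn
      · subst h0
        symm
        rw [Multiset.count_eq_zero]
        intro hmem
        exact absurd (hpos hmem) (by omega)
      · symm
        rw [Multiset.count_eq_zero]
        intro hmem
        have := hbound a hmem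
        omega

lemma finrank_VV (n k m : ℕ) : Module.finrank ℚ ↥(VV n k m) = p k n m := by
  haveI := cls_finite n k m
  haveI := Fintype.ofFinite ↥(cls n k m)
  rw [VV, Module.finrank_eq_card_basis (basisRestrictSupport ℚ (cls n k m))]
  rw [← Nat.card_eq_fintype_card, Nat.card_congr (clsEquiv n k m), p,
    Nat.card_eq_fintype_card]

instance VV_findim (n k m : ℕ) : FiniteDimensional ℚ ↥(VV n k m) := by
  haveI := cls_finite n k m
  exact Module.Finite.of_basis (basisRestrictSupport ℚ (cls n k m))

end Counting

/-! ## The abstract sl2 lemma -/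

section LemmaA
variable {V : Type*} [AddCommGroup V] [Module ℚ V]

lemma sl2_nonzero_chain (e f : Module.End ℚ V) (v : V) (μ : ℚ) (hμ : μ < 0)
    (hev : e v = 0)
    (hch : ∀ j : ℕ, e (f ((f^j) v)) - f (e ((f^j) v)) = (μ - 2*j) • ((f^j) v))
    (hnil : ∃ J : ℕ, (f^J) v = 0) : v = 0 := by
  have key : ∀ j : ℕ, e ((f^(j+1)) v) = (((j:ℚ)+1) * (μ - j)) • ((f^j) v) := by
    intro j
    induction j with
    | zero =>
      have h0 := hch 0
      rw [pow_zero, Module.End.one_apply, hev, map_zero, sub_zero] at h0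
      rw [zero_add, pow_one, h0, pow_zero, Module.End.one_apply]
      congr 1
      push_cast
      ring
    | succ j ih =>
      have hc := hch (j+1)
      push_cast at hc
      rw [sub_eq_iff_eq_add] at hc
      have hpow : (f^(j+1+1)) v = f ((f^(j+1)) v) := by rw [pow_succ']; rfl
      have hpow2 : f ((f^j) v) = (f^(j+1)) v := by rw [pow_succ']; rfl
      rw [hpow, hc, ih, map_smul, hpow2, ← add_smul]
      congr 1
      push_cast
      ring
  by_contra hv
  have all : ∀ j : ℕ, (f^j) v ≠ 0 := by
    intro j
    induction j with
    | zero => rw [pow_zero]; simpa using hv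
    | succ j ih =>
      intro hz
      have hk := key j
      have hpow : (f^(j+1)) v = f ((f^j) v) := by rw [pow_succ']; rfl
      rw [hz, map_zero] at hk
      have hcoeff : ((j:ℚ)+1) * (μ - j) ≠ 0 := by
        apply mul_ne_zero
        · positivity
        · have hj : (0:ℚ) ≤ (j:ℚ) := Nat.cast_nonneg j
          intro h
          have : μ = (j:ℚ) := by linarith
          rw [this] at hμ
          linarith
      rcases smul_eq_zero.mp hk.symm with h | h
      · exact hcoeff h
      · exact ih h
  obtain ⟨J, hJ⟩ := hnil
  exact all J hJ

end LemmaA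

/-! ## Dual machinery and surjectivity of E -/

section Surj
variable {n : ℕ}

def AEop (n : ℕ) : Module.End ℚ (Module.Dual ℚ (P n)) :=
  LinearMap.dualMap (Eop n).toLinearMap

def AFop (n : ℕ) : Module.End ℚ (Module.Dual ℚ (P n)) :=
  LinearMap.dualMap (Fop n).toLinearMap

lemma AEop_apply (ψ : Module.Dual ℚ (P n)) (x : P n) : (AEop n ψ) x = ψ ((Eop n) x) := rfl
lemma AFop_apply (ψ : Module.Dual ℚ (P n)) (x : P n) : (AFop n ψ) x = ψ ((Fop n) x) := rfl

/-- `ψ` is concentrated on the graded class `(kk, c)`. -/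
def Conc (n kk : ℕ) (c : ℤ) (ψ : Module.Dual ℚ (P n)) : Prop :=
  ∀ (σ : Fin (n+1) →₀ ℕ) (r : ℚ),
    ((degD σ : ℤ) ≠ (kk:ℤ) ∨ (degW σ : ℤ) ≠ c) → ψ (monomial σ r) = 0

lemma dual_apply_sum (ψ : Module.Dual ℚ (P n)) (x : P n) :
    ψ x = ∑ σ ∈ x.support, ψ (monomial σ (coeff σ x)) := by
  conv_lhs => rw [x.as_sum]
  rw [map_sum]

lemma conc_kill {kk : ℕ} {c : ℤ} {a b : ℕ} {ψ : Module.Dual ℚ (P n)} (hψ : Conc n kk c ψ)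
    {x : P n} (hx : x ∈ VV n a b) (hab : (a:ℤ) ≠ (kk:ℤ) ∨ (b:ℤ) ≠ c) : ψ x = 0 := by
  rw [dual_apply_sum]
  apply Finset.sum_eq_zero
  intro σ hσ
  obtain ⟨h1, h2⟩ := (mem_VV_iff x).mp hx σ hσ
  exact hψ σ _ (by rw [h1, h2]; exact hab)

lemma conc_zero {kk : ℕ} {c : ℤ} (hc : c < 0) {ψ : Module.Dual ℚ (P n)}
    (hψ : Conc n kk c ψ) : ψ = 0 := by
  apply LinearMap.ext
  intro x
  rw [dual_apply_sum]
  rw [LinearMap.zero_apply]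
  apply Finset.sum_eq_zero
  intro σ _
  exact hψ σ _ (Or.inr (by
    have : (0:ℤ) ≤ (degW σ : ℤ) := Int.ofNat_nonneg _
    omega))

lemma conc_AF {kk : ℕ} {c : ℤ} {ψ : Module.Dual ℚ (P n)} (hψ : Conc n kk c ψ) :
    Conc n kk (c-1) (AFop n ψ) := by
  intro σ r hσ
  rw [AFop_apply]
  apply conc_kill hψ (F_mon_mem σ r)
  rcases hσ with h | h
  · exact Or.inl h
  · apply Or.inr
    push_cast
    omega

lemma conc_H_eval {kk : ℕ} {c : ℤ} {ψ : Module.Dual ℚ (P n)} (hψ : Conc n kk c ψ)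
    (x : P n) : ψ ((Hop n) x) = ((n:ℚ) * (kk:ℚ) - 2 * (c:ℚ)) * ψ x := by
  have hx : (Hop n) x = ∑ σ ∈ x.support, (Hop n) (monomial σ (coeff σ x)) := by
    conv_lhs => rw [x.as_sum]
    rw [map_sum]
  rw [hx, map_sum, dual_apply_sum ψ x, Finset.mul_sum]
  apply Finset.sum_congr rfl
  intro σ _
  rw [H_mon, map_smul, smul_eq_mul]
  by_cases hz : ψ (monomial σ (coeff σ x)) = 0
  · rw [hz, mul_zero, mul_zero]
  · have hcl : (degD σ : ℤ) = (kk:ℤ) ∧ (degW σ : ℤ) = c := by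
      by_contra hcon
      push_neg at hcon
      apply hz
      apply hψ σ _
      by_cases h1 : (degD σ : ℤ) = (kk:ℤ)
      · exact Or.inr (hcon h1)
      · exact Or.inl h1
    obtain ⟨h1, h2⟩ := hcl
    congr 1
    have h1' : ((degD σ : ℕ) : ℚ) = (kk : ℚ) := by exact_mod_cast h1
    have h2' : ((degW σ : ℕ) : ℚ) = (c : ℚ) := by exact_mod_cast h2
    rw [h1', h2']

lemma comm_eval {kk : ℕ} {c : ℤ} {ψ : Module.Dual ℚ (P n)} (hψ : Conc n kk c ψ) :
    AEop n (AFop n ψ) - AFop n (AEop n ψ) = (2*(c:ℚ) - (n:ℚ)*(kk:ℚ)) • ψ := by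
  apply LinearMap.ext
  intro x
  simp only [LinearMap.sub_apply, LinearMap.smul_apply]
  rw [AEop_apply, AFop_apply, AFop_apply, AEop_apply]
  have hbr : (Eop n) ((Fop n) x) - (Fop n) ((Eop n) x) = (Hop n) x := by
    rw [← Derivation.commutator_apply]
    exact DFunLike.congr_fun (bracket_EF n) x
  have : ψ ((Fop n) ((Eop n) x)) = ψ ((Eop n) ((Fop n) x)) - ψ ((Hop n) x) := by
    rw [← map_sub]
    congr 1
    rw [← hbr]
    abel
  rw [this, conc_H_eval hψ]
  rw [smul_eq_mul]
  ring

def projV (n k m : ℕ) : P n →ₗ[ℚ] ↥(VV n k m) :=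
  haveI := Classical.decPred (· ∈ cls n k m)
  LinearMap.codRestrict (VV n k m)
    ((AddMonoidAlgebra.coeffLinearEquiv ℚ).symm.toLinearMap ∘ₗ
      (Finsupp.supported ℚ ℚ (cls n k m)).subtype ∘ₗ Finsupp.restrictDom ℚ ℚ (cls n k m) ∘ₗ
      (AddMonoidAlgebra.coeffLinearEquiv ℚ).toLinearMap)
    (fun x => (Finsupp.restrictDom ℚ ℚ (cls n k m)
      (AddMonoidAlgebra.coeffLinearEquiv ℚ (x : AddMonoidAlgebra ℚ (Fin (n+1) →₀ ℕ)))).2)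

lemma projV_coe (n k m : ℕ) (x : P n) :
    letI := Classical.decPred (· ∈ cls n k m)
    ((projV n k m x : ↥(VV n k m)) : P n) =
      AddMonoidAlgebra.ofCoeff (Finsupp.filter (· ∈ cls n k m) (AddMonoidAlgebra.coeff x)) := rfl

lemma projV_apply (n k m : ℕ) (x : P n) (a : Fin (n+1) →₀ ℕ) [Decidable (a ∈ cls n k m)] :
    coeff a ((projV n k m x : ↥(VV n k m)) : P n) = if a ∈ cls n k m then coeff a x else 0 := by
  letI := Classical.decPred (· ∈ cls n k m)
  rw [projV_coe]
  split_ifs with h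
  · exact Finsupp.filter_apply_pos _ _ h
  · exact Finsupp.filter_apply_neg _ _ h

lemma projV_mem (n k m : ℕ) {x : P n} (hx : x ∈ VV n k m) :
    projV n k m x = ⟨x, hx⟩ := by
  classical
  apply Subtype.ext
  apply MvPolynomial.ext
  intro a
  rw [projV_apply]
  have hsup : ↑x.support ⊆ cls n k m := hx
  split_ifs with h
  · rfl
  · by_cases ha : a ∈ x.support
    · exact absurd (hsup ha) h
    · exact (MvPolynomial.notMem_support_iff.mp ha).symm

lemma projV_monomial_not_mem (n k m : ℕ) {σ : Fin (n+1) →₀ ℕ} (hσ : σ ∉ cls n k m) (r : ℚ) :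
    projV n k m (monomial σ r) = 0 := by
  classical
  apply Subtype.ext
  apply MvPolynomial.ext
  intro a
  rw [projV_apply]
  rw [show ((0 : ↥(VV n k m)) : P n) = 0 from rfl, coeff_zero]
  split_ifs with h
  · rw [coeff_monomial, if_neg]
    intro heq
    exact hσ (heq ▸ h)
  · rfl

theorem E_surj (n k m : ℕ) (hm : 1 ≤ m) (h2 : 2*m ≤ n*k) :
    ∀ y ∈ VV n k (m-1), ∃ x ∈ VV n k m, (Eop n) x = y := by
  by_contra hcon
  push_neg at hcon
  obtain ⟨y0, hy0mem, hy0⟩ := hcon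
  set E1 : ↥(VV n k m) →ₗ[ℚ] ↥(VV n k (m-1)) :=
    LinearMap.restrict (Eop n).toLinearMap (fun x hx => E_mem hx) with hE1
  set R := LinearMap.range E1 with hR
  have hy0R : (⟨y0, hy0mem⟩ : ↥(VV n k (m-1))) ∉ R := by
    intro hmem
    obtain ⟨x, hx⟩ := hmem
    apply hy0 x.1 x.2
    have hval := congrArg Subtype.val hx
    rw [hE1] at hval
    rw [LinearMap.restrict_apply] at hval
    exact hval
  have hq0 : Submodule.Quotient.mk (p := R) (⟨y0, hy0mem⟩ : ↥(VV n k (m-1))) ≠ 0 :=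
    fun h => hy0R ((Submodule.Quotient.mk_eq_zero R).mp h)
  obtain ⟨g, hg⟩ : ∃ g : Module.Dual ℚ (↥(VV n k (m-1)) ⧸ R),
      g (Submodule.Quotient.mk ⟨y0, hy0mem⟩) ≠ 0 := by
    by_contra hall
    push_neg at hall
    exact hq0 ((Module.forall_dual_apply_eq_zero_iff ℚ _).mp hall)
  set φ0 : Module.Dual ℚ ↥(VV n k (m-1)) := g ∘ₗ R.mkQ with hφ0
  set φ : Module.Dual ℚ (P n) := φ0 ∘ₗ projV n k (m-1) with hφ
  have hconc : Conc n k ((m:ℤ)-1) φ := by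
    intro σ r hσ
    have hnotin : σ ∉ cls n k (m-1) := by
      intro hin
      obtain ⟨h1, h2'⟩ := hin
      rcases hσ with h | h
      · apply h; omega
      · apply h; omega
    rw [hφ, LinearMap.comp_apply, projV_monomial_not_mem n k (m-1) hnotin, map_zero]
  have hev : AEop n φ = 0 := by
    apply LinearMap.ext
    intro x
    rw [AEop_apply, LinearMap.zero_apply]
    have hx : (Eop n) x = ∑ σ ∈ x.support, (Eop n) (monomial σ (coeff σ x)) := by
      conv_lhs => rw [x.as_sum]
      rw [map_sum]
    rw [hx, map_sum]
    apply Finset.sum_eq_zero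
    intro σ _
    by_cases hcl : degD σ = k ∧ degW σ = m
    · have hmem : monomial σ (coeff σ x) ∈ VV n k m := monomial_mem_VV hcl.1 hcl.2 _
      have hEmem : (Eop n) (monomial σ (coeff σ x)) ∈ VV n k (m-1) := E_mem hmem
      rw [hφ, LinearMap.comp_apply, projV_mem n k (m-1) hEmem, hφ0, LinearMap.comp_apply]
      have hsub : (⟨(Eop n) (monomial σ (coeff σ x)), hEmem⟩ : ↥(VV n k (m-1)))
          = E1 ⟨monomial σ (coeff σ x), hmem⟩ := by
        apply Subtype.ext
        rfl
      rw [hsub]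
      have hmk : R.mkQ (E1 ⟨monomial σ (coeff σ x), hmem⟩) = 0 := by
        rw [Submodule.mkQ_apply, Submodule.Quotient.mk_eq_zero]
        exact LinearMap.mem_range_self E1 _
      rw [hmk, map_zero]
    · rcases Nat.eq_zero_or_pos (degW σ) with hw0 | hw1
      · rw [E_mon_zero σ _ hw0, map_zero]
      · apply conc_kill hconc (E_mon_mem σ _)
        push_neg at hcl
        by_cases h1 : degD σ = k
        · have h2' := hcl h1
          exact Or.inr (by omega)
        · exact Or.inl (by omega)
  have hconcj : ∀ j : ℕ, Conc n k ((m:ℤ)-1-j) (((AFop n)^j) φ) := by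
    intro j
    induction j with
    | zero =>
      simpa using hconc
    | succ j ih =>
      have hp : ((AFop n)^(j+1)) φ = AFop n (((AFop n)^j) φ) := by rw [pow_succ']; rfl
      have heq : (m:ℤ)-1-(j+1 : ℕ) = ((m:ℤ)-1-(j:ℕ))-1 := by push_cast; ring
      rw [hp, heq]
      exact conc_AF ih
  have hμ : (2*((m:ℚ)-1) - (n:ℚ)*(k:ℚ)) < 0 := by
    have h2' : (2*m:ℚ) ≤ (n:ℚ)*(k:ℚ) := by exact_mod_cast h2
    linarith
  have hfinal := sl2_nonzero_chain (AEop n) (AFop n) φ (2*((m:ℚ)-1) - (n:ℚ)*(k:ℚ)) hμ hev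
    (by
      intro j
      have hc := comm_eval (hconcj j)
      rw [hc]
      congr 1
      push_cast
      ring)
    ⟨m, conc_zero (by omega : (m:ℤ)-1-(m:ℕ) < 0) (hconcj m)⟩
  have hy0val : φ y0 ≠ 0 := by
    rw [hφ, LinearMap.comp_apply, projV_mem n k (m-1) hy0mem, hφ0, LinearMap.comp_apply,
      Submodule.mkQ_apply]
    exact hg
  rw [hfinal] at hy0val
  exact hy0val rfl

end Surj

/-! ## Final assembly -/

section Final

/-- `E` restricted to the graded piece `(k, m)`. -/
def ER (n k m : ℕ) : ↥(VV n k m) →ₗ[ℚ] ↥(VV n k (m-1)) :=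
  LinearMap.restrict (Eop n).toLinearMap (fun _ hx => E_mem hx)

lemma countA (n k m : ℕ) (hm : 1 ≤ m) (h2 : 2*m ≤ n*k) :
    p k n m = Module.finrank ℚ ↥(LinearMap.ker (ER n k m)) + p k n (m-1) := by
  have hsurj : Function.Surjective (ER n k m) := by
    intro y
    obtain ⟨x, hx, hEx⟩ := E_surj n k m hm h2 y.1 y.2
    exact ⟨⟨x, hx⟩, Subtype.ext hEx⟩
  have hrn := LinearMap.finrank_range_add_finrank_ker (ER n k m)
  rw [LinearMap.range_eq_top.mpr hsurj, finrank_top] at hrn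
  rw [← finrank_VV n k m, ← finrank_VV n k (m-1), ← hrn]
  omega

lemma countB (n k m : ℕ) :
    p k n m ≤ Module.finrank ℚ ↥(LinearMap.ker (ER n k m)) + p k n (m-1) := by
  have hrn := LinearMap.finrank_range_add_finrank_ker (ER n k m)
  have hle : Module.finrank ℚ ↥(LinearMap.range (ER n k m))
      ≤ Module.finrank ℚ ↥(VV n k (m-1)) := Submodule.finrank_le _
  rw [← finrank_VV n k m, ← finrank_VV n k (m-1)]
  omega

lemma kerB0 (n k : ℕ) :
    Module.finrank ℚ ↥(LinearMap.ker (ER n k 0)) = p k n 0 := by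
  have hker : LinearMap.ker (ER n k 0) = ⊤ := by
    apply LinearMap.ker_eq_top.mpr
    apply LinearMap.ext
    intro x
    apply Subtype.ext
    show (Eop n) x.1 = _
    rw [E_zero x.2]
    rfl
  rw [hker, finrank_top, finrank_VV]

lemma kerMono (n k m : ℕ) (hn : Even n) (hk : 2 ≤ k) (hnm : n ≤ m) :
    Module.finrank ℚ ↥(LinearMap.ker (ER n (k-2) (m-n)))
      ≤ Module.finrank ℚ ↥(LinearMap.ker (ER n k m)) := by
  set M0 : ↥(LinearMap.ker (ER n (k-2) (m-n))) →ₗ[ℚ] P n :=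
    (LinearMap.mulLeft ℚ (Qp n)) ∘ₗ (VV n (k-2) (m-n)).subtype ∘ₗ
      (LinearMap.ker (ER n (k-2) (m-n))).subtype with hM0
  have hclass : ∀ z : ↥(LinearMap.ker (ER n (k-2) (m-n))), M0 z ∈ VV n k m := by
    intro z
    have h := mul_mem_VV (Qp_mem (n := n)) z.1.2
    rw [show 2 + (k-2) = k by omega, show n + (m-n) = m by omega] at h
    exact h
  have hkerm : ∀ z : ↥(LinearMap.ker (ER n (k-2) (m-n))), (Eop n) (M0 z) = 0 := by
    intro z
    have hz : (Eop n) (z.1.1) = 0 := by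
      have := z.2
      rw [LinearMap.mem_ker] at this
      have := congrArg Subtype.val this
      exact this
    show (Eop n) (Qp n * z.1.1) = 0
    rw [Derivation.leibniz, hz, E_Qp]
    simp
  set M1 : ↥(LinearMap.ker (ER n (k-2) (m-n))) →ₗ[ℚ] ↥(VV n k m) :=
    LinearMap.codRestrict (VV n k m) M0 hclass with hM1
  have hker1 : ∀ z, M1 z ∈ LinearMap.ker (ER n k m) := by
    intro z
    rw [LinearMap.mem_ker]
    apply Subtype.ext
    show (Eop n) ((M1 z) : P n) = _
    have : ((M1 z) : P n) = M0 z := rfl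
    rw [this, hkerm]
    rfl
  set L : ↥(LinearMap.ker (ER n (k-2) (m-n))) →ₗ[ℚ] ↥(LinearMap.ker (ER n k m)) :=
    LinearMap.codRestrict (LinearMap.ker (ER n k m)) M1 hker1 with hL
  have hinj : Function.Injective L := by
    intro a b hab
    have hv1 : M1 a = M1 b := Subtype.ext_iff.mp hab
    have h0 : M0 a = M0 b := Subtype.ext_iff.mp hv1
    rw [hM0] at h0
    simp only [LinearMap.comp_apply] at h0
    have hQinj : Function.Injective (fun x : P n => Qp n * x) :=
      mul_right_injective₀ (Qp_ne_zero hn)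
    have h1 := hQinj h0
    exact Subtype.ext (Subtype.ext h1)
  exact LinearMap.finrank_le_finrank_of_injective hinj

lemma p_zero (a b : ℕ) : p a b 0 = 1 := by
  rw [p]
  apply Fintype.card_eq_one_iff.mpr
  refine ⟨⟨⟨0, by intro i h; exact absurd h (Multiset.notMem_zero i), rfl⟩, ?_, ?_⟩, ?_⟩
  · simp
  · intro j hj
    exact absurd hj (Multiset.notMem_zero j)
  · intro y
    apply Subtype.ext
    apply Nat.Partition.ext
    have hsum := y.1.parts_sum
    have : ∀ x ∈ y.1.parts, x = 0 := by
      intro x hx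
      exact Nat.eq_zero_of_le_zero (hsum ▸ Multiset.single_le_sum (fun _ _ => Nat.zero_le _) x hx)
    apply Multiset.eq_zero_of_forall_notMem
    intro x hx
    have h1 := this x hx
    have h2 := y.1.parts_pos hx
    omega

end Final

end RS

/-- Reiner–Stanton unimodality of $F_{n,k}(q)$: for even $n$, $k ≥ 2$ and
$n ≤ m ≤ nk/2$, $p(k,n,m) - p(k,n,m-1) ≥ p(k-2,n,m-n) - p(k-2,n,m-n-1)$. -/
theorem F_unimodal (n k m : ℕ) (hn : Even n) (hk : 2 ≤ k) (hnm : n ≤ m)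
    (hm : 2 * m ≤ n * k) :
    (pZ (k - 2) n ((m : ℤ) - n) : ℤ) - pZ (k - 2) n ((m : ℤ) - n - 1) ≤
      (pZ k n m : ℤ) - pZ k n ((m : ℤ) - 1) := by
  by_cases hn0 : n = 0
  · subst hn0
    have hm0 : m = 0 := by omega
    subst hm0
    have a1 : pZ (k-2) 0 ((0:ℕ):ℤ) = 1 := by
      rw [pZ, if_pos (by norm_num)]
      norm_num [RS.p_zero]
    have a2 : pZ (k-2) 0 (((0:ℕ):ℤ) - ((0:ℕ):ℤ) - 1) = 0 := by
      rw [pZ, if_neg (by norm_num)]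
    have a3 : pZ k 0 ((0:ℕ):ℤ) = 1 := by
      rw [pZ, if_pos (by norm_num)]
      norm_num [RS.p_zero]
    have a4 : pZ k 0 (((0:ℕ):ℤ) - 1) = 0 := by
      rw [pZ, if_neg (by norm_num)]
    rw [show ((0:ℕ):ℤ) - ((0:ℕ):ℤ) = ((0:ℕ):ℤ) by ring] at *
    rw [a1, a2, a3, a4]
  · have hn2 : 2 ≤ n := by
      rcases hn with ⟨c, hc⟩
      omega
    have hm1 : 1 ≤ m := by omega
    have e1 : pZ k n (m:ℤ) = p k n m := by
      rw [pZ, if_pos (by positivity)]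
      congr 1
    have e2 : pZ k n ((m:ℤ)-1) = p k n (m-1) := by
      rw [pZ, if_pos (by omega)]
      congr 1
      omega
    have e3 : pZ (k-2) n ((m:ℤ)-n) = p (k-2) n (m-n) := by
      rw [pZ, if_pos (by omega)]
      congr 1
      omega
    have hA := RS.countA n k m hm1 hm
    have hC := RS.kerMono n k m hn hk hnm
    rw [e1, e2, e3]
    by_cases hmn : m = n
    · have e4 : pZ (k-2) n ((m:ℤ)-n-1) = 0 := by
        rw [pZ, if_neg (by omega)]
      rw [e4]
      have hB0 := RS.kerB0 n (k-2)
      have hmn0 : m - n = 0 := by omega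
      rw [hmn0] at hC
      rw [hmn0]
      push_cast
      omega
    · have e4 : pZ (k-2) n ((m:ℤ)-n-1) = p (k-2) n (m-n-1) := by
        rw [pZ, if_pos (by omega)]
        congr 1
        omega
      rw [e4]
      have hB := RS.countB n (k-2) (m-n)
      push_cast
      omega
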